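/- There exists a function f ∈ L¹[0,1] with ∫₀¹ f(t) dt = 0 such that the function s ↦ (1/s)∫_s^1 f(t) dt is not integrable on (0,1). Explicitly, f(t) = 1/(t (log t)²) for 0 < t < 1/2 and f(t) = −2/log 2 for 1/2 ≤ t < 1 has these properties. -/

import Mathlib

open MeasureTheory Set Filter Real

/-- The explicit witness: `f(t) = 1/(t (log t)²)` for `0 < t < 1/2` and
`f(t) = -2/log 2` for `1/2 ≤ t`. -/
noncomputable def f7 : ℝ → ℝ := fun t =>
  if t < 1/2 then 1 / (t * (Real.log t) ^ 2) else -2 / Real.log 2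

namespace Aux7

/-- the core positive-part function -/
noncomputable def p : ℝ → ℝ := fun t => 1 / (t * (Real.log t) ^ 2)

lemma log_neg_of (t : ℝ) (h0 : 0 < t) (h2 : t ≤ 1/2) : Real.log t < 0 :=
  Real.log_neg h0 (by linarith)

lemma contOn (a : ℝ) (ha : 0 < a) : ContinuousOn p (Icc a (1/2)) := by
  apply ContinuousOn.div continuousOn_const
  · exact (continuousOn_id).mul ((Real.continuousOn_log.mono (fun x hx => by
      simp only [mem_compl_iff, mem_singleton_iff]
      exact ne_of_gt (lt_of_lt_of_le ha hx.1))).pow 2)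
  · intro x hx
    have hx0 : 0 < x := lt_of_lt_of_le ha hx.1
    have hl : Real.log x < 0 := log_neg_of x hx0 hx.2
    exact mul_ne_zero (ne_of_gt hx0) (pow_ne_zero 2 (ne_of_lt hl))

lemma hasDeriv (t : ℝ) (h0 : 0 < t) (h2 : t ≤ 1/2) :
    HasDerivAt (fun x => -(Real.log x)⁻¹) (p t) t := by
  have hl : Real.log t < 0 := log_neg_of t h0 h2
  have h : HasDerivAt (fun x => -(Real.log x)⁻¹) _ t :=
    ((Real.hasDerivAt_log (ne_of_gt h0)).inv (ne_of_lt hl)).neg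
  convert h using 1
  unfold p
  field_simp

lemma interval_eq (a : ℝ) (ha : 0 < a) (ha2 : a ≤ 1/2) :
    ∫ t in Ioo a (1/2), p t = (Real.log 2)⁻¹ + (Real.log a)⁻¹ := by
  rw [← integral_Ioc_eq_integral_Ioo, ← intervalIntegral.integral_of_le ha2]
  rw [intervalIntegral.integral_eq_sub_of_hasDerivAt (f := fun x => -(Real.log x)⁻¹)
    (fun t ht => by
      rw [uIcc_of_le ha2] at ht
      exact hasDeriv t (lt_of_lt_of_le ha ht.1) ht.2)
    (((contOn a ha).mono (by rw [uIcc_of_le ha2])).intervalIntegrable)]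
  have : Real.log (1/2) = -Real.log 2 := by
    rw [one_div, Real.log_inv]
  rw [this]
  ring

end Aux7

namespace Aux7

noncomputable def aseq : ℕ → ℝ := fun n => Real.exp (-(n + 1 : ℝ))

lemma aseq_pos (n : ℕ) : 0 < aseq n := Real.exp_pos _

lemma aseq_le (n : ℕ) : aseq n ≤ 1/2 := by
  have h1 : aseq n ≤ Real.exp (-1) := Real.exp_le_exp.mpr (by
    have : (0:ℝ) ≤ n := Nat.cast_nonneg n
    linarith)
  have h2 : Real.exp (-1) ≤ 1/2 := by
    rw [Real.exp_neg, one_div]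
    exact inv_anti₀ (by norm_num)
      (le_of_lt (lt_trans (by norm_num) Real.exp_one_gt_d9))
  linarith

lemma log_aseq (n : ℕ) : Real.log (aseq n) = -(n + 1 : ℝ) := Real.log_exp _

lemma aseq_tendsto : Filter.Tendsto aseq atTop (nhds 0) := by
  have h1 : Filter.Tendsto (fun n : ℕ => ((n : ℝ) + 1)) atTop atTop :=
    tendsto_atTop_add_const_right atTop 1 tendsto_natCast_atTop_atTop
  exact Real.tendsto_exp_atBot.comp (tendsto_neg_atTop_atBot.comp h1)

lemma p_nonneg (x : ℝ) (hx : 0 < x) : 0 ≤ p x := by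
  unfold p; positivity

lemma p_intOn (n : ℕ) : IntegrableOn p (Ioc (aseq n) (1/2)) :=
  (((contOn _ (aseq_pos n)).integrableOn_Icc)).mono_set Ioc_subset_Icc_self

lemma p_int : IntegrableOn p (Ioc 0 (1/2)) := by
  apply integrableOn_Ioc_of_intervalIntegral_norm_bounded (l := atTop) (a := aseq)
    (b := fun _ => 1/2) (I := (Real.log 2)⁻¹) p_intOn aseq_tendsto tendsto_const_nhds
  refine Filter.Eventually.of_forall (fun n => ?_)
  rw [setIntegral_congr_fun measurableSet_Ioc
    (g := p) (fun x hx => Real.norm_of_nonneg (p_nonneg x (lt_trans (aseq_pos n) hx.1)))]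
  rw [integral_Ioc_eq_integral_Ioo, interval_eq _ (aseq_pos n) (aseq_le n)]
  have hl : Real.log (aseq n) < 0 := by rw [log_aseq]; nlinarith [Nat.cast_nonneg (α := ℝ) n]
  have : (Real.log (aseq n))⁻¹ ≤ 0 := inv_nonpos.mpr (le_of_lt hl)
  linarith

end Aux7

namespace Aux7

lemma log2_pos : (0:ℝ) < Real.log 2 := Real.log_pos (by norm_num)

lemma aseq_lt (n : ℕ) : aseq n < 1/2 := by
  have h1 : aseq n ≤ Real.exp (-1) := Real.exp_le_exp.mpr (by
    have : (0:ℝ) ≤ n := Nat.cast_nonneg n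
    linarith)
  have h2 : Real.exp (-1) < 1/2 := by
    rw [Real.exp_neg, one_div]
    exact inv_strictAnti₀ (by norm_num) (lt_trans (by norm_num) Real.exp_one_gt_d9)
  linarith

lemma f7_eq_p : EqOn p f7 (Ioo 0 (1/2)) := fun t ht => by
  simp only [f7, p, if_pos ht.2]

lemma f7_intOn_left : IntegrableOn f7 (Ioo 0 (1/2)) :=
  (p_int.mono_set Ioo_subset_Ioc_self).congr_fun f7_eq_p measurableSet_Ioo

lemma f7_intOn_right : IntegrableOn f7 (Ico (1/2 : ℝ) 1) := by
  refine (integrableOn_const (C := -2/Real.log 2) measure_Ico_lt_top.ne).congr_fun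
    (fun t ht => ?_) measurableSet_Ico
  simp only [f7, if_neg (not_lt.mpr ht.1)]

lemma f7_int : IntegrableOn f7 (Ioo 0 1) := by
  rw [← Set.Ioo_union_Ico_eq_Ioo (by norm_num : (0:ℝ) < 1/2) (by norm_num : (1:ℝ)/2 ≤ 1)]
  exact f7_intOn_left.union f7_intOn_right

lemma disj : Disjoint (Ioo (0:ℝ) (1/2)) (Ico (1/2:ℝ) 1) := by
  rw [Set.disjoint_left]
  exact fun x hx hx' => absurd hx.2 (not_lt.mpr hx'.1)

lemma disj' (s : ℝ) : Disjoint (Ioo s (1/2)) (Ico (1/2:ℝ) 1) := by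
  rw [Set.disjoint_left]
  exact fun x hx hx' => absurd hx.2 (not_lt.mpr hx'.1)

lemma int_right : ∫ t in Ico (1/2:ℝ) 1, f7 t = -(Real.log 2)⁻¹ := by
  rw [setIntegral_congr_fun measurableSet_Ico (g := fun _ => -2/Real.log 2)
    (fun t ht => by simp only [f7, if_neg (not_lt.mpr ht.1)])]
  rw [setIntegral_const, measureReal_def, Real.volume_Ico, smul_eq_mul]
  have h2 : Real.log 2 ≠ 0 := ne_of_gt log2_pos
  rw [ENNReal.toReal_ofReal (by norm_num)]
  have h12 : (1 - 1/2 : ℝ) = 1/2 := by norm_num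
  rw [h12, div_eq_mul_inv]
  ring

lemma int_mid (s : ℝ) (hs : s ∈ Ioo (0:ℝ) (1/2)) :
    ∫ t in Ioo s (1/2), f7 t = (Real.log 2)⁻¹ + (Real.log s)⁻¹ := by
  rw [setIntegral_congr_fun measurableSet_Ioo (f := f7) (g := p)
    (fun t ht => (f7_eq_p ⟨lt_trans hs.1 ht.1, ht.2⟩).symm)]
  exact interval_eq s hs.1 (le_of_lt hs.2)

lemma int_tail (s : ℝ) (hs : s ∈ Ioo (0:ℝ) (1/2)) :
    ∫ t in Ioo s 1, f7 t = (Real.log s)⁻¹ := by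
  rw [← Set.Ioo_union_Ico_eq_Ioo hs.2 (by norm_num : (1:ℝ)/2 ≤ 1)]
  rw [setIntegral_union (disj' s) measurableSet_Ico
    (f7_intOn_left.mono_set (Ioo_subset_Ioo_left (le_of_lt hs.1))) f7_intOn_right]
  rw [int_mid s hs, int_right]
  ring

lemma int_left : ∫ t in Ioo (0:ℝ) (1/2), f7 t = (Real.log 2)⁻¹ := by
  have hcover : AECover (volume.restrict (Ioo (0:ℝ) (1/2))) atTop
      (fun n => Ioo (aseq n) (1/2)) :=
    aecover_Ioo_of_Ioo aseq_tendsto tendsto_const_nhds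
  refine hcover.integral_eq_of_tendsto _ f7_intOn_left ?_
  have heq : ∀ n : ℕ, ∫ t in Ioo (aseq n) (1/2), f7 t ∂(volume.restrict (Ioo 0 (1/2)))
      = (Real.log 2)⁻¹ + (-((n:ℝ) + 1))⁻¹ := by
    intro n
    rw [Measure.restrict_restrict measurableSet_Ioo,
      inter_eq_self_of_subset_left (Ioo_subset_Ioo_left (le_of_lt (aseq_pos n)))]
    rw [int_mid _ ⟨aseq_pos n, aseq_lt n⟩, log_aseq]
  simp only [heq]
  have h1' : Filter.Tendsto (fun n : ℕ => ((n:ℝ) + 1)) atTop atTop :=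
    tendsto_atTop_add_const_right atTop 1 tendsto_natCast_atTop_atTop
  have h0 : Filter.Tendsto (fun n : ℕ => (-((n:ℝ) + 1))⁻¹) atTop (nhds 0) := by
    have h2 := (tendsto_inv_atTop_zero.comp h1').neg
    simp only [Function.comp_def, inv_neg] at h2 ⊢
    simpa using h2
  simpa using tendsto_const_nhds.add h0

lemma int_total : ∫ t in Ioo (0:ℝ) 1, f7 t = 0 := by
  rw [← Set.Ioo_union_Ico_eq_Ioo (by norm_num : (0:ℝ) < 1/2) (by norm_num : (1:ℝ)/2 ≤ 1)]
  rw [setIntegral_union disj measurableSet_Ico f7_intOn_left f7_intOn_right]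
  rw [int_left, int_right]
  ring

end Aux7

namespace Aux7

noncomputable def q : ℝ → ℝ := fun s => -(s⁻¹ * (Real.log s)⁻¹)

lemma q_contOn (a : ℝ) (ha : 0 < a) : ContinuousOn q (Icc a (1/2)) := by
  apply ContinuousOn.neg
  apply ContinuousOn.mul
  · exact continuousOn_inv₀.comp continuousOn_id (fun x hx =>
      ne_of_gt (lt_of_lt_of_le ha hx.1))
  · apply ContinuousOn.inv₀
    · exact Real.continuousOn_log.mono (fun x hx => ne_of_gt (lt_of_lt_of_le ha hx.1))
    · exact fun x hx => ne_of_lt (log_neg_of x (lt_of_lt_of_le ha hx.1) hx.2)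

lemma q_hasDeriv (t : ℝ) (h0 : 0 < t) (h2 : t ≤ 1/2) :
    HasDerivAt (fun s => -Real.log (-Real.log s)) (q t) t := by
  have hl : Real.log t < 0 := log_neg_of t h0 h2
  have hinner : HasDerivAt (fun s => -Real.log s) (-t⁻¹) t :=
    (Real.hasDerivAt_log (ne_of_gt h0)).neg
  have houter : HasDerivAt Real.log (-Real.log t)⁻¹ (-Real.log t) :=
    Real.hasDerivAt_log (ne_of_gt (neg_pos.mpr hl))
  have h : HasDerivAt (fun s => -Real.log (-Real.log s)) (-((-Real.log t)⁻¹ * -t⁻¹)) t := by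
    have h' := (houter.comp t hinner).neg; exact h'
  convert h using 1
  simp only [q, inv_neg]
  ring

lemma q_interval (a : ℝ) (ha : 0 < a) (ha2 : a ≤ 1/2) :
    ∫ s in Ioo a (1/2), q s = Real.log (-Real.log a) - Real.log (Real.log 2) := by
  rw [← integral_Ioc_eq_integral_Ioo, ← intervalIntegral.integral_of_le ha2]
  rw [intervalIntegral.integral_eq_sub_of_hasDerivAt
    (f := fun s => -Real.log (-Real.log s))
    (fun t ht => by
      rw [uIcc_of_le ha2] at ht
      exact q_hasDeriv t (lt_of_lt_of_le ha ht.1) ht.2)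
    (((q_contOn a ha).mono (by rw [uIcc_of_le ha2])).intervalIntegrable)]
  have hh : -Real.log (1/2) = Real.log 2 := by
    rw [one_div, Real.log_inv]; ring
  rw [hh]
  ring

lemma not_int : ¬ IntegrableOn (fun s => s⁻¹ * ∫ t in Ioo s 1, f7 t) (Ioo 0 1) := by
  intro H
  have H1 : IntegrableOn q (Ioo (0:ℝ) (1/2)) := by
    have H2 := (H.mono_set (Ioo_subset_Ioo_right (by norm_num : (1:ℝ)/2 ≤ 1))).neg
    refine MeasureTheory.IntegrableOn.congr_fun H2 (fun s hs => ?_) measurableSet_Ioo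
    simp only [q, Pi.neg_apply]
    rw [int_tail s hs]
  have hcover : AECover (volume.restrict (Ioo (0:ℝ) (1/2))) atTop
      (fun n => Ioo (aseq n) (1/2)) :=
    aecover_Ioo_of_Ioo aseq_tendsto tendsto_const_nhds
  have htend := hcover.integral_tendsto_of_countably_generated H1
  have heq : ∀ n : ℕ, ∫ s in Ioo (aseq n) (1/2), q s ∂(volume.restrict (Ioo 0 (1/2)))
      = Real.log ((n:ℝ) + 1) - Real.log (Real.log 2) := by
    intro n
    rw [Measure.restrict_restrict measurableSet_Ioo,
      inter_eq_self_of_subset_left (Ioo_subset_Ioo_left (le_of_lt (aseq_pos n)))]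
    rw [q_interval _ (aseq_pos n) (aseq_le n), log_aseq]
    norm_num
  simp only [heq] at htend
  have h1' : Filter.Tendsto (fun n : ℕ => ((n:ℝ) + 1)) atTop atTop :=
    tendsto_atTop_add_const_right atTop 1 tendsto_natCast_atTop_atTop
  have hatTop : Filter.Tendsto (fun n : ℕ => Real.log ((n:ℝ) + 1) - Real.log (Real.log 2))
      atTop atTop := by
    simp only [sub_eq_add_neg]
    exact tendsto_atTop_add_const_right atTop _ (Real.tendsto_log_atTop.comp h1')
  exact not_tendsto_nhds_of_tendsto_atTop hatTop _ htend

end Aux7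

/-- There exists `f ∈ L¹[0,1]` with `∫₀¹ f = 0` such that `s ↦ (1/s)∫_s^1 f` is not
integrable on `(0,1)`; the explicit `f7` has these properties. -/
theorem stmt_7 :
    (IntegrableOn f7 (Set.Ioo 0 1) ∧
      (∫ t in Set.Ioo (0:ℝ) 1, f7 t) = 0 ∧
      ¬ IntegrableOn (fun s => s⁻¹ * ∫ t in Set.Ioo s 1, f7 t) (Set.Ioo 0 1)) ∧
    ∃ f : ℝ → ℝ, IntegrableOn f (Set.Ioo 0 1) ∧
      (∫ t in Set.Ioo (0:ℝ) 1, f t) = 0 ∧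
      ¬ IntegrableOn (fun s => s⁻¹ * ∫ t in Set.Ioo s 1, f t) (Set.Ioo 0 1) := by
  refine ⟨⟨Aux7.f7_int, Aux7.int_total, Aux7.not_int⟩,
    ⟨f7, Aux7.f7_int, Aux7.int_total, Aux7.not_int⟩⟩
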